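/- arXiv:2206.08668 — 5 statements merged into one kernel-verified Lean document; each statement's English description precedes it below -/
import Mathlib

section
/- (Lefschetz principle) Let u be a nonprincipal ultrafilter on the set of prime numbers, and for each prime p let F_p^alg denote an algebraic closure of the field with p elements (e.g. AlgebraicClosure (ZMod p)). Then the ultraproduct ∏_u F_p^alg is isomorphic, as a ring (equivalently, as a field), to the field ℂ of complex numbers. -/
/-- The ideal of the product ring `∀ w, A w` consisting of families that vanish
on a set belonging to the ultrafilter `u`. The quotient by this ideal is the
ultraproduct of the rings `A w` along `u`. -/
def ultraprodIdeal {W : Type*} (u : Ultrafilter W) (A : W → Type*)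
    [∀ w, CommRing (A w)] : Ideal (∀ w, A w) where
  carrier := {x | {w | x w = 0} ∈ u}
  zero_mem' := by
    have : {w | (0 : (∀ w, A w)) w = 0} = Set.univ := by ext w; simp
    rw [Set.mem_setOf_eq, this]
    exact u.toFilter.univ_mem
  add_mem' := by
    intro a b ha hb
    refine u.toFilter.mem_of_superset (Filter.inter_mem ha hb) ?_
    rintro w ⟨h1, h2⟩
    simp only [Set.mem_setOf_eq] at *
    rw [Pi.add_apply, h1, h2, add_zero]
  smul_mem' := by
    intro c x hx
    refine u.toFilter.mem_of_superset hx ?_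
    intro w hw
    simp only [Set.mem_setOf_eq] at *
    rw [smul_eq_mul, Pi.mul_apply, hw, mul_zero]

instance (p : Nat.Primes) : Fact (p : ℕ).Prime := ⟨p.2⟩

section General

variable {W : Type*} (u : Ultrafilter W) (A : W → Type*) [∀ w, Field (A w)]

lemma ultraprodIdeal_mem_iff {x : ∀ w, A w} :
    x ∈ ultraprodIdeal u A ↔ {w | x w = 0} ∈ u := Iff.rfl

theorem ultraprodIdeal_isMaximal : (ultraprodIdeal u A).IsMaximal := by
  rw [Ideal.isMaximal_iff]
  constructor
  · intro h
    have he : {w | (1 : ∀ w, A w) w = 0} = ∅ := by ext w; simp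
    rw [ultraprodIdeal_mem_iff, he] at h
    exact u.toFilter.empty_notMem h
  · intro J x hIJ hxI hxJ
    classical
    set y : ∀ w, A w := fun w => (x w)⁻¹
    have h1 : (1 : ∀ w, A w) - x * y ∈ ultraprodIdeal u A := by
      rw [ultraprodIdeal_mem_iff]
      have hc : {w | x w = 0}ᶜ ∈ u := Ultrafilter.compl_mem_iff_notMem.2 hxI
      refine u.toFilter.mem_of_superset hc ?_
      intro w hw
      simp only [Set.mem_compl_iff, Set.mem_setOf_eq] at *
      show 1 - x w * (x w)⁻¹ = 0
      rw [mul_inv_cancel₀ hw, sub_self]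
    have := J.add_mem (hIJ h1) (J.mul_mem_right y hxJ)
    simpa using this

noncomputable instance ultraprodField : Field ((∀ w, A w) ⧸ ultraprodIdeal u A) :=
  have := ultraprodIdeal_isMaximal u A
  Ideal.Quotient.field _

theorem ultraprod_isAlgClosed [∀ w, IsAlgClosed (A w)] :
    IsAlgClosed ((∀ w, A w) ⧸ ultraprodIdeal u A) := by
  classical
  apply IsAlgClosed.of_exists_root
  intro q hq hirr
  set n := q.natDegree with hn
  have hn1 : 0 < n := hq.natDegree_pos.2 (fun h => hirr.not_isUnit (h ▸ isUnit_one))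
  have ha' : ∀ i, ∃ b : ∀ w, A w, Ideal.Quotient.mk (ultraprodIdeal u A) b = q.coeff i :=
    fun i => Ideal.Quotient.mk_surjective _
  choose b hb using ha'
  set a : ℕ → ∀ w, A w := fun i => if i = n then 1 else b i with ha_def
  have ha : ∀ i, Ideal.Quotient.mk (ultraprodIdeal u A) (a i) = q.coeff i := by
    intro i
    by_cases h : i = n
    · subst h
      simp [ha_def, hq.coeff_natDegree, ← hn]
      exact hq.coeff_natDegree.symm
    · simp [ha_def, h, hb]
  have han : a n = 1 := by simp [ha_def]
  -- per-component polynomial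
  set P : ∀ w, Polynomial (A w) := fun w =>
    Polynomial.X ^ n + ∑ i ∈ Finset.range n, Polynomial.C (a i w) * Polynomial.X ^ i with hP
  have hdeglt : ∀ w, (∑ i ∈ Finset.range n, Polynomial.C (a i w) * Polynomial.X ^ i).degree
      < (n : WithBot ℕ) := by
    intro w
    refine lt_of_le_of_lt (Polynomial.degree_sum_le _ _) ?_
    rw [Finset.sup_lt_iff (by exact_mod_cast WithBot.bot_lt_coe n)]
    intro i hi
    refine lt_of_le_of_lt (Polynomial.degree_C_mul_X_pow_le _ _) ?_
    exact_mod_cast Finset.mem_range.1 hi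
  have hPdeg : ∀ w, (P w).degree = n := by
    intro w
    rw [hP]
    rw [Polynomial.degree_add_eq_left_of_degree_lt (by rw [Polynomial.degree_X_pow]; exact hdeglt w),
      Polynomial.degree_X_pow]
  have hroot : ∀ w, ∃ r : A w, (P w).eval r = 0 := by
    intro w
    obtain ⟨r, hr⟩ := IsAlgClosed.exists_root (P w)
      (by rw [hPdeg w]; exact_mod_cast hn1.ne')
    exact ⟨r, hr⟩
  choose r hr using hroot
  refine ⟨Ideal.Quotient.mk _ r, ?_⟩
  rw [Polynomial.eval_eq_sum_range]
  have hsum : ∀ i, q.coeff i * (Ideal.Quotient.mk (ultraprodIdeal u A) r) ^ i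
      = Ideal.Quotient.mk (ultraprodIdeal u A) (a i * r ^ i) := by
    intro i; rw [map_mul, map_pow, ha]
  have hz : (∑ i ∈ Finset.range (n + 1), a i * r ^ i) = 0 := by
    funext w
    have := hr w
    rw [hP] at this
    simp only [Polynomial.eval_add, Polynomial.eval_pow, Polynomial.eval_X,
      Polynomial.eval_finset_sum, Polynomial.eval_mul, Polynomial.eval_C] at this
    calc (∑ i ∈ Finset.range (n + 1), a i * r ^ i) w
        = ∑ i ∈ Finset.range (n + 1), a i w * r w ^ i := by
          simp [Finset.sum_apply]
      _ = (∑ i ∈ Finset.range n, a i w * r w ^ i) + a n w * r w ^ n := Finset.sum_range_succ _ _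
      _ = 0 := by
          rw [han]
          simp only [Pi.one_apply, one_mul]
          rw [add_comm]
          exact this
  calc ∑ i ∈ Finset.range (q.natDegree + 1),
        q.coeff i * (Ideal.Quotient.mk (ultraprodIdeal u A) r) ^ i
      = Ideal.Quotient.mk (ultraprodIdeal u A) (∑ i ∈ Finset.range (n + 1), a i * r ^ i) := by
        rw [map_sum]
        exact Finset.sum_congr rfl fun i _ => hsum i
    _ = 0 := by rw [hz, map_zero]

end General


section Primes

instance (p : Nat.Primes) : CharP (AlgebraicClosure (ZMod p)) p :=
  charP_of_injective_algebraMap (algebraMap (ZMod p) _).injective p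

variable (u : Ultrafilter Nat.Primes)

theorem ultraprod_charZero (hu : ∀ s : Set Nat.Primes, s.Finite → s ∉ u) :
    CharZero ((∀ p : Nat.Primes, AlgebraicClosure (ZMod p)) ⧸
      ultraprodIdeal u fun p => AlgebraicClosure (ZMod p)) := by
  set I := ultraprodIdeal u fun p : Nat.Primes => AlgebraicClosure (ZMod p) with hI
  have h0 : CharP ((∀ p : Nat.Primes, AlgebraicClosure (ZMod p)) ⧸ I) 0 := by
    constructor
    intro k
    rw [zero_dvd_iff]
    constructor
    · intro hk
      by_contra hk0
      have hmk : ((k : ℕ) : ((∀ p : Nat.Primes, AlgebraicClosure (ZMod p)) ⧸ I))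
          = Ideal.Quotient.mk I ((k : ℕ) : ∀ p : Nat.Primes, AlgebraicClosure (ZMod p)) :=
        (map_natCast (Ideal.Quotient.mk I) k).symm
      rw [hmk, Ideal.Quotient.eq_zero_iff_mem] at hk
      have hset : {p : Nat.Primes | ((k : ∀ p : Nat.Primes, AlgebraicClosure (ZMod p)) p = 0)} ∈ u := hk
      have heq : {p : Nat.Primes | ((k : ∀ p : Nat.Primes, AlgebraicClosure (ZMod p)) p = 0)}
          = {p : Nat.Primes | ((k : ℕ) : AlgebraicClosure (ZMod p)) = 0} := by
        ext p; simp [Pi.natCast_apply]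
      rw [heq] at hset
      have hsub : {p : Nat.Primes | ((k : ℕ) : AlgebraicClosure (ZMod p)) = 0}
          ⊆ Subtype.val ⁻¹' (Set.Iic k) := by
        intro p hp
        have hd : (p : ℕ) ∣ k := (CharP.cast_eq_zero_iff (AlgebraicClosure (ZMod p)) p k).1 hp
        exact Nat.le_of_dvd (Nat.pos_of_ne_zero hk0) hd
      have hfin : Set.Finite {p : Nat.Primes | ((k : ℕ) : AlgebraicClosure (ZMod p)) = 0} :=
        ((Set.finite_Iic k).preimage Subtype.val_injective.injOn).subset hsub
      exact hu _ hfin hset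
    · rintro rfl; simp
  exact CharP.charP_to_charZero _

end Primes

open Cardinal in
theorem ultraprod_card_le (u : Ultrafilter Nat.Primes) :
    #((∀ p : Nat.Primes, AlgebraicClosure (ZMod p)) ⧸
      ultraprodIdeal u fun p => AlgebraicClosure (ZMod p)) ≤ 𝔠 := by
  have h1 : #((∀ p : Nat.Primes, AlgebraicClosure (ZMod p)) ⧸
      ultraprodIdeal u fun p => AlgebraicClosure (ZMod p))
      ≤ #(∀ p : Nat.Primes, AlgebraicClosure (ZMod p)) :=
    Cardinal.mk_le_of_surjective Ideal.Quotient.mk_surjective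
  have h2 : ∀ p : Nat.Primes, #(AlgebraicClosure (ZMod p)) ≤ ℵ₀ := by
    intro p
    have h := Algebra.IsAlgebraic.cardinalMk_le_max (ZMod p) (AlgebraicClosure (ZMod p))
    have hz : #(ZMod p) ≤ ℵ₀ := (Cardinal.lt_aleph0_of_finite _).le
    exact h.trans (max_le hz le_rfl)
  calc #((∀ p : Nat.Primes, AlgebraicClosure (ZMod p)) ⧸
        ultraprodIdeal u fun p => AlgebraicClosure (ZMod p))
      ≤ #(∀ p : Nat.Primes, AlgebraicClosure (ZMod p)) := h1
    _ = Cardinal.prod fun p : Nat.Primes => #(AlgebraicClosure (ZMod p)) := Cardinal.mk_pi _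
    _ ≤ Cardinal.prod fun _ : Nat.Primes => ℵ₀ := Cardinal.prod_le_prod _ _ h2
    _ = ℵ₀ ^ #Nat.Primes := Cardinal.prod_const' _ _
    _ = ℵ₀ ^ ℵ₀ := by rw [Cardinal.mk_eq_aleph0]
    _ = 𝔠 := Cardinal.aleph0_power_aleph0

open Cardinal in
theorem ultraprod_card_ge (u : Ultrafilter Nat.Primes)
    (hu : ∀ s : Set Nat.Primes, s.Finite → s ∉ u) :
    𝔠 ≤ #((∀ p : Nat.Primes, AlgebraicClosure (ZMod p)) ⧸
      ultraprodIdeal u fun p => AlgebraicClosure (ZMod p)) := by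
  classical
  letI : Encodable Nat.Primes := Subtype.encodable
  letI : Denumerable Nat.Primes := Denumerable.ofEncodableOfInfinite Nat.Primes
  let e : Nat.Primes ≃ ℕ := Denumerable.eqv Nat.Primes
  let emb : ∀ p : Nat.Primes, ℕ ↪ AlgebraicClosure (ZMod p) :=
    fun p => Infinite.natEmbedding _
  set I := ultraprodIdeal u fun p : Nat.Primes => AlgebraicClosure (ZMod p) with hI
  let x : (ℕ → Bool) → ∀ p : Nat.Primes, AlgebraicClosure (ZMod p) :=
    fun f p => emb p (Encodable.encode (List.ofFn fun i : Fin (e p + 1) => f i))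
  have hinj : Function.Injective fun f => Ideal.Quotient.mk I (x f) := by
    intro f g hfg
    by_contra hne
    obtain ⟨k, hk⟩ := Function.ne_iff.1 hne
    rw [Ideal.Quotient.eq] at hfg
    have hset : {p : Nat.Primes | (x f - x g) p = 0} ∈ u := hfg
    have hsub : {p : Nat.Primes | (x f - x g) p = 0} ⊆ e ⁻¹' (Set.Iio k) := by
      intro p hp
      simp only [Set.mem_setOf_eq, Pi.sub_apply, sub_eq_zero] at hp
      by_contra hlt
      have hke : k ≤ e p := not_lt.1 hlt
      have hl : (List.ofFn fun i : Fin (e p + 1) => f i)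
          = List.ofFn fun i : Fin (e p + 1) => g i :=
        Encodable.encode_injective ((emb p).injective hp)
      have := congrFun (List.ofFn_inj.1 hl) ⟨k, Nat.lt_succ_of_le hke⟩
      exact hk this
    have hfin : Set.Finite {p : Nat.Primes | (x f - x g) p = 0} :=
      ((Set.finite_Iio k).preimage e.injective.injOn).subset hsub
    exact hu _ hfin hset
  have hle : #(ℕ → Bool) ≤ #((∀ p : Nat.Primes, AlgebraicClosure (ZMod p)) ⧸ I) :=
    Cardinal.mk_le_of_injective hinj
  have harr : #(ℕ → Bool) = 𝔠 := by
    rw [Cardinal.mk_arrow]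
    simp [Cardinal.mk_bool, Cardinal.two_power_aleph0]
  rwa [harr] at hle
/-- Lefschetz principle: for a nonprincipal ultrafilter `u` on the
set of prime numbers, the ultraproduct of the algebraic closures of the prime
fields `𝔽_p` is isomorphic, as a ring, to the field `ℂ`. -/
theorem lefschetz_principle (u : Ultrafilter Nat.Primes)
    (hu : ∀ s : Set Nat.Primes, s.Finite → s ∉ u) :
    Nonempty
      (((∀ p : Nat.Primes, AlgebraicClosure (ZMod p)) ⧸
          ultraprodIdeal u fun p => AlgebraicClosure (ZMod p)) ≃+* ℂ) := by
  haveI : CharZero ((∀ p : Nat.Primes, AlgebraicClosure (ZMod p)) ⧸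
      ultraprodIdeal u fun p => AlgebraicClosure (ZMod p)) := ultraprod_charZero u hu
  haveI : IsAlgClosed ((∀ p : Nat.Primes, AlgebraicClosure (ZMod p)) ⧸
      ultraprodIdeal u fun p => AlgebraicClosure (ZMod p)) :=
    ultraprod_isAlgClosed u _
  have hcard : (Cardinal.mk ((∀ p : Nat.Primes, AlgebraicClosure (ZMod p)) ⧸
      ultraprodIdeal u fun p => AlgebraicClosure (ZMod p))) = Cardinal.continuum :=
    le_antisymm (ultraprod_card_le u) (ultraprod_card_ge u hu)
  exact IsAlgClosed.ringEquiv_of_equiv_of_charZero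
    (by rw [hcard]; exact Cardinal.aleph0_lt_continuum)
    (Cardinal.eq.1 (by rw [hcard, Cardinal.mk_complex]))
end

section
/- Let W be a countably infinite set, u a nonprincipal ultrafilter on W, and (A_w)_{w∈W} a family of countably infinite sets. Then the ultraproduct ∏_u A_w, i.e. the quotient of ∏_{w∈W} A_w by the equivalence relation identifying (a_w) and (b_w) when {w ∈ W : a_w = b_w} ∈ u, has cardinality 2^{ℵ₀} (the cardinality of the continuum). -/
/-- The equivalence relation on the product `∀ w, A w` identifying two families
that agree on a set belonging to the ultrafilter `u`. The quotient is the
ultraproduct `∏_u A w`. -/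
def ultraSetoid {W : Type*} (u : Ultrafilter W) (A : W → Type*) :
    Setoid (∀ w, A w) where
  r a b := {w | a w = b w} ∈ u
  iseqv := by
    refine ⟨fun a => ?_, fun {a b} h => ?_, fun {a b c} h1 h2 => ?_⟩
    · have : {w | a w = a w} = Set.univ := by ext w; simp
      rw [this]; exact u.toFilter.univ_mem
    · refine u.toFilter.mem_of_superset h fun w hw => ?_
      exact (hw : a w = b w).symm
    · refine u.toFilter.mem_of_superset (Filter.inter_mem h1 h2) ?_
      rintro w ⟨hw1, hw2⟩
      exact (hw1 : a w = b w).trans hw2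

/-- for a nonprincipal ultrafilter `u` on a countably infinite set
`W` and a family of countably infinite sets `A w`, the ultraproduct `∏_u A w`
has the cardinality of the continuum, `2^ℵ₀`. -/
theorem card_ultraproduct_countable {W : Type*} [Countable W] [Infinite W]
    (u : Ultrafilter W) (hu : ∀ s : Set W, s.Finite → s ∉ u)
    (A : W → Type*) [∀ w, Countable (A w)] [∀ w, Infinite (A w)] :
    Cardinal.mk (Quotient (ultraSetoid u A)) = 2 ^ Cardinal.aleph0 := by
  classical
  obtain ⟨e⟩ : Nonempty (W ≃ ℕ) := nonempty_equiv_of_countable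
  have g : ∀ w, A w ≃ ℕ := fun w =>
    (nonempty_equiv_of_countable : Nonempty (A w ≃ ℕ)).some
  refine le_antisymm ?_ ?_
  · have h1 : Cardinal.mk (∀ w, A w) = 2 ^ Cardinal.aleph0 := by
      rw [Cardinal.mk_pi]
      simp only [Cardinal.mk_eq_aleph0, Cardinal.prod_const, Cardinal.lift_aleph0]
      rw [Cardinal.aleph0_power_aleph0, Cardinal.two_power_aleph0]
    exact h1 ▸ Cardinal.mk_quotient_le
  · -- lower bound: embed `ℕ → Bool` into the ultraproduct
    set F : (ℕ → Bool) → ∀ w, A w := fun x w =>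
      (g w).symm (Encodable.encode (fun i : Fin (e w) => x i)) with hF
    have hinj : Function.Injective
        (fun x : ℕ → Bool => (Quotient.mk (ultraSetoid u A) (F x))) := by
      intro x y hxy
      by_contra hne
      obtain ⟨k, hk⟩ : ∃ k, x k ≠ y k := by
        by_contra h
        push_neg at h
        exact hne (funext h)
      have hmem : {w | F x w = F y w} ∈ u := Quotient.eq.mp hxy
      have hsub : {w | F x w = F y w} ⊆ e ⁻¹' Set.Iic k := by
        intro w hw
        simp only [Set.mem_setOf_eq, hF] at hw
        have := (g w).symm.injective hw
        have henc := Encodable.encode_injective this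
        by_contra hlt
        simp only [Set.mem_preimage, Set.mem_Iic, not_le] at hlt
        exact hk (congrFun henc ⟨k, hlt⟩)
      have hfin : (e ⁻¹' Set.Iic k).Finite :=
        Set.Finite.preimage e.injective.injOn (Set.finite_Iic k)
      exact hu _ (hfin.subset hsub) hmem
    have hle := (Cardinal.lift_mk_le').mpr
      ⟨⟨_, hinj⟩⟩
    rw [Cardinal.mk_arrow, Cardinal.mk_bool, Cardinal.mk_nat] at hle
    simpa using hle
end

section
/- Let R and S be commutative integral domains, and let R → S be an injective ring homomorphism that is faithfully flat (i.e. S is a faithfully flat R-module). If S is integrally closed in its field of fractions, then R is integrally closed in its field of fractions. -/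
open scoped nonZeroDivisors

lemma dvd_of_ff {R S : Type*} [CommRing R] [CommRing S] [Algebra R S]
    (hff : Module.FaithfullyFlat R S) {a b : R} {s : S}
    (h : algebraMap R S a = s * algebraMap R S b) : b ∣ a := by
  by_contra hdvd
  have hmk : (Ideal.Quotient.mk (Ideal.span {b}) a) ≠ 0 := by
    rwa [Ne, Ideal.Quotient.eq_zero_iff_mem, Ideal.mem_span_singleton]
  set g : R →ₗ[R] R ⧸ Ideal.span {b} :=
    LinearMap.toSpanSingleton R _ (Ideal.Quotient.mk (Ideal.span {b}) a) with hgdef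
  have hg : g ≠ 0 := fun h0 => hmk (by simpa [hgdef] using LinearMap.congr_fun h0 1)
  apply hg
  rw [Module.FaithfullyFlat.zero_iff_lTensor_zero R S g]
  apply TensorProduct.ext'
  intro s' r
  have h1 : g r = r • (Ideal.Quotient.mk (Ideal.span {b}) a) := rfl
  have key : s' ⊗ₜ[R] (Ideal.Quotient.mk (Ideal.span {b}) a) = 0 := by
    have e1 : (Ideal.Quotient.mk (Ideal.span {b}) a) =
        a • (Ideal.Quotient.mk (Ideal.span {b}) 1) := by
      rw [Algebra.smul_def]
      simp [Ideal.Quotient.algebraMap_eq]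
    rw [e1, TensorProduct.tmul_smul, TensorProduct.smul_tmul',
      Algebra.smul_def, h]
    have e2 : (s * algebraMap R S b * s') ⊗ₜ[R] (Ideal.Quotient.mk (Ideal.span {b}) 1)
        = (s * s') ⊗ₜ[R] (b • (Ideal.Quotient.mk (Ideal.span {b}) 1)) := by
      rw [TensorProduct.tmul_smul, TensorProduct.smul_tmul', Algebra.smul_def]
      congr 1
      ring
    rw [e2]
    have : (b • (Ideal.Quotient.mk (Ideal.span {b}) 1) : R ⧸ Ideal.span {b}) = 0 := by
      simp [Algebra.smul_def, Ideal.Quotient.algebraMap_eq, Ideal.Quotient.eq_zero_iff_mem,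
        Ideal.mem_span_singleton_self]
    rw [this, TensorProduct.tmul_zero]
  simp only [LinearMap.lTensor_tmul, LinearMap.zero_apply, h1,
    TensorProduct.tmul_smul]
  rw [key, smul_zero]



/-- if `R → S` is an injective, faithfully flat ring homomorphism
between integral domains and `S` is integrally closed (in its fraction field),
then `R` is integrally closed (in its fraction field). -/
theorem isIntegrallyClosed_of_faithfullyFlat {R S : Type*} [CommRing R] [IsDomain R]
    [CommRing S] [IsDomain S] [Algebra R S]
    (hinj : Function.Injective (algebraMap R S))
    (hff : Module.FaithfullyFlat R S)
    (hS : IsIntegrallyClosed S) : IsIntegrallyClosed R := by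
  rw [isIntegrallyClosed_iff (FractionRing R)]
  intro x hx
  have hle : R⁰ ≤ S⁰.comap (algebraMap R S) :=
    nonZeroDivisors_le_comap_nonZeroDivisors_of_injective _ hinj
  let φ : FractionRing R →+* FractionRing S :=
    IsLocalization.map (M := R⁰) (T := S⁰) (FractionRing S) (algebraMap R S) hle
  have hcomm : (algebraMap S (FractionRing S)).comp (algebraMap R S)
      = φ.comp (algebraMap R (FractionRing R)) :=
    (IsLocalization.map_comp hle).symm
  have hint : IsIntegral S (φ x) := IsIntegral.map_of_comp_eq (algebraMap R S) φ hcomm hx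
  obtain ⟨s, hs⟩ := (IsIntegrallyClosed.isIntegral_iff (K := FractionRing S)).mp hint
  obtain ⟨⟨a, b⟩, hab⟩ := IsLocalization.mk'_surjective R⁰ x
  dsimp only at hab
  have hspec : x * algebraMap R (FractionRing R) (b : R) = algebraMap R (FractionRing R) a := by
    rw [← hab]; exact IsLocalization.mk'_spec _ a b
  have hmap : ∀ r : R, φ (algebraMap R (FractionRing R) r)
      = algebraMap S (FractionRing S) (algebraMap R S r) := fun r =>
    IsLocalization.map_eq hle r
  have heq : algebraMap R S a = s * algebraMap R S b := by
    apply IsFractionRing.injective S (FractionRing S)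
    rw [map_mul, ← hmap, ← hmap, hs, ← map_mul, hspec]
  obtain ⟨r, hr⟩ := dvd_of_ff hff heq
  refine ⟨r, ?_⟩
  rw [← hab, IsLocalization.eq_mk'_iff_mul_eq, ← map_mul]
  congr 1
  rw [hr]; ring
end

section
/- Let R be a commutative ring, W a set, u an ultrafilter on W, and let R_∗ = R^W/u denote the ultrapower of R, which is an R-algebra via the diagonal map. For every finitely presented R-module M, the natural R_∗-linear map M ⊗_R R_∗ → M^W/u, sending m ⊗ (class of (r_w)) to the class of (r_w • m), is bijective. -/
open Filter TensorProduct

instance germSMulCommClass {W R : Type*} [CommRing R] (l : Filter W) :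
    SMulCommClass R (Filter.Germ l R) (Filter.Germ l R) where
  smul_comm r c x := by
    refine Filter.Germ.inductionOn₂ c x fun c x => ?_
    show r • ((↑c : Filter.Germ l R) • (↑x : Filter.Germ l R)) =
      (↑c : Filter.Germ l R) • (r • (↑x : Filter.Germ l R))
    rw [← Filter.Germ.coe_smul' c x, ← Filter.Germ.coe_smul r,
      ← Filter.Germ.coe_smul r, ← Filter.Germ.coe_smul' c]
    congr 1
    funext w
    simp only [Pi.smul_apply, Pi.mul_apply, smul_eq_mul]
    ring

section Aux

variable {W R : Type*} [CommRing R] (l : Filter W)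

noncomputable instance germAlgebra : Algebra R (Filter.Germ l R) :=
  Algebra.ofModule
    (fun r x y => by
      refine Filter.Germ.inductionOn₂ x y fun x y => ?_
      rw [← Filter.Germ.coe_smul, ← Filter.Germ.coe_mul, ← Filter.Germ.coe_mul,
        ← Filter.Germ.coe_smul]
      congr 1; funext w
      simp only [Pi.smul_apply, Pi.mul_apply, smul_eq_mul]; ring)
    (fun r x y => by
      refine Filter.Germ.inductionOn₂ x y fun x y => ?_
      rw [← Filter.Germ.coe_smul, ← Filter.Germ.coe_mul, ← Filter.Germ.coe_mul,
        ← Filter.Germ.coe_smul]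
      congr 1; funext w
      simp only [Pi.smul_apply, Pi.mul_apply, smul_eq_mul]; ring)

instance germIsScalarTower {M : Type*} [AddCommMonoid M] [Module R M] :
    IsScalarTower R (Filter.Germ l R) (Filter.Germ l M) where
  smul_assoc r c x := by
    refine Filter.Germ.inductionOn₂ c x fun c x => ?_
    rw [← Filter.Germ.coe_smul r c, ← Filter.Germ.coe_smul' c x,
      ← Filter.Germ.coe_smul' (r • c) x, ← Filter.Germ.coe_smul r]
    congr 1; funext w
    simp only [Pi.smul_apply]
    exact smul_assoc r (c w) (x w)

variable {l}

theorem germ_coe_sum {ι N : Type*} [AddCommMonoid N] (s : Finset ι) (g : ι → W → N) :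
    (∑ i ∈ s, ((g i : Filter.Germ l N))) = (↑(fun w => ∑ i ∈ s, g i w) : Filter.Germ l N) := by
  classical
  induction s using Finset.induction_on with
  | empty => simp only [Finset.sum_empty]; exact (Filter.Germ.coe_zero).symm
  | @insert a s h ih =>
      rw [Finset.sum_insert h, ih, ← Filter.Germ.coe_add]
      congr 1; funext w
      rw [Pi.add_apply, Finset.sum_insert h]

theorem germ_map_add {N N' : Type*} (f : N → N')
    [AddCommMonoid N] [AddCommMonoid N'] (hf : ∀ a b, f (a + b) = f a + f b)
    (x y : Filter.Germ l N) :
    Filter.Germ.map f (x + y) = Filter.Germ.map f x + Filter.Germ.map f y :=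
  Filter.Germ.inductionOn₂ x y fun a b => by
    rw [← Filter.Germ.coe_add, Filter.Germ.map_coe, Filter.Germ.map_coe,
      Filter.Germ.map_coe, ← Filter.Germ.coe_add]
    congr 1; funext w; exact hf _ _

theorem germ_map_zero {N N' : Type*} (f : N → N')
    [AddCommMonoid N] [AddCommMonoid N'] (hf : f 0 = 0) :
    Filter.Germ.map f (0 : Filter.Germ l N) = 0 := by
  rw [← Filter.Germ.coe_zero, Filter.Germ.map_coe, ← Filter.Germ.coe_zero]
  congr 1; funext w; exact hf

variable (l)

/-- The constant-germ map as an `R`-linear map. -/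
noncomputable def germConstL (N : Type*) [AddCommGroup N] [Module R N] :
    N →ₗ[R] Filter.Germ l N where
  toFun m := (↑(fun _ : W => m) : Filter.Germ l N)
  map_add' a b := by
    rw [← Filter.Germ.coe_add]; rfl
  map_smul' r a := by
    rw [RingHom.id_apply, ← Filter.Germ.coe_smul]; rfl

/-- The natural map `R_* ⊗[R] N → N_*`. -/
noncomputable def germPhi (N : Type*) [AddCommGroup N] [Module R N] :
    (Filter.Germ l R) ⊗[R] N →ₗ[Filter.Germ l R] Filter.Germ l N :=
  (germConstL l N).liftBaseChange (Filter.Germ l R)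

theorem germPhi_tmul {N : Type*} [AddCommGroup N] [Module R N] (r : W → R) (m : N) :
    germPhi l N ((↑r : Filter.Germ l R) ⊗ₜ[R] m) = (↑(fun w => r w • m) : Filter.Germ l N) := by
  rw [germPhi, LinearMap.liftBaseChange_tmul]
  show (↑r : Filter.Germ l R) • (↑(fun _ : W => m) : Filter.Germ l N) = _
  rw [← Filter.Germ.coe_smul']
  rfl

theorem germPhi_natural {N N' : Type*} [AddCommGroup N] [Module R N]
    [AddCommGroup N'] [Module R N'] (f : N →ₗ[R] N')
    (x : (Filter.Germ l R) ⊗[R] N) :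
    Filter.Germ.map f (germPhi l N x) = germPhi l N' (f.baseChange (Filter.Germ l R) x) := by
  induction x with
  | zero => rw [map_zero, map_zero, map_zero]; exact germ_map_zero f (map_zero f)
  | tmul c m =>
      refine c.inductionOn fun r => ?_
      rw [LinearMap.baseChange_tmul, germPhi_tmul, germPhi_tmul, Filter.Germ.map_coe]
      congr 1; funext w
      simp only [Function.comp_apply, map_smul]
  | add a b ha hb =>
      rw [map_add, map_add, map_add, germ_map_add f (map_add f), ha, hb]

theorem germPhi_surjective (N : Type*) [AddCommGroup N] [Module R N] [Module.Finite R N] :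
    Function.Surjective (germPhi (R := R) l N) := by
  classical
  obtain ⟨n, v, hv⟩ := Module.Finite.exists_fin (R := R) (M := N)
  intro x
  refine x.inductionOn fun f => ?_
  have hmem : ∀ w, ∃ c : Fin n → R, ∑ i, c i • v i = f w := by
    intro w
    have : f w ∈ Submodule.span R (Set.range v) := hv ▸ Submodule.mem_top
    rwa [Submodule.mem_span_range_iff_exists_fun] at this
  choose c hc using hmem
  refine ⟨∑ i, (↑(fun w => c w i) : Filter.Germ l R) ⊗ₜ[R] v i, ?_⟩
  rw [map_sum]
  have : ∀ i : Fin n, germPhi l N ((↑(fun w => c w i) : Filter.Germ l R) ⊗ₜ[R] v i)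
      = (↑(fun w => c w i • v i) : Filter.Germ l N) := fun i => germPhi_tmul l _ _
  rw [Finset.sum_congr rfl fun i _ => this i, germ_coe_sum]
  congr 1; funext w
  exact hc w

theorem germPhi_free_bijective (n : ℕ) :
    Function.Bijective (germPhi (R := R) l (Fin n → R)) := by
  classical
  set ψ : Filter.Germ l (Fin n → R) → (Filter.Germ l R) ⊗[R] (Fin n → R) :=
    fun x => ∑ i, (Filter.Germ.map (fun v : Fin n → R => v i) x) ⊗ₜ[R] (Pi.single i 1 : Fin n → R)
    with hψ
  have hψadd : ∀ x y, ψ (x + y) = ψ x + ψ y := by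
    intro x y
    rw [hψ, ← Finset.sum_add_distrib]
    refine Finset.sum_congr rfl fun i _ => ?_
    rw [germ_map_add (fun v : Fin n → R => v i) (fun a b => rfl), TensorProduct.add_tmul]
  refine Function.bijective_iff_has_inverse.mpr ⟨ψ, ?_, ?_⟩
  · intro x
    induction x with
    | zero =>
        rw [map_zero]
        simp only [hψ]
        refine Finset.sum_eq_zero fun i _ => ?_
        rw [germ_map_zero (fun v : Fin n → R => v i) rfl, TensorProduct.zero_tmul]
    | tmul c m =>
        refine c.inductionOn fun r => ?_
        rw [germPhi_tmul]
        simp only [hψ]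
        have h1 : ∀ i : Fin n,
            (Filter.Germ.map (fun v : Fin n → R => v i)
              (↑(fun w => r w • m) : Filter.Germ l (Fin n → R))) ⊗ₜ[R] (Pi.single i 1 : Fin n → R)
            = (↑r : Filter.Germ l R) ⊗ₜ[R] Pi.single i (m i) := by
          intro i
          rw [Filter.Germ.map_coe]
          have : ((fun v : Fin n → R => v i) ∘ fun w => r w • m) = m i • r := by
            funext w
            simp only [Function.comp_apply, Pi.smul_apply, smul_eq_mul]
            ring
          rw [this, Filter.Germ.coe_smul, TensorProduct.smul_tmul]
          congr 1
          funext j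
          by_cases h : j = i <;> simp [h, Pi.single_apply]
        rw [Finset.sum_congr rfl fun i _ => h1 i, ← TensorProduct.tmul_sum,
          Finset.univ_sum_single]
    | add a b ha hb =>
        rw [map_add, hψadd, ha, hb]
  · intro x
    refine x.inductionOn fun f => ?_
    simp only [hψ]
    rw [map_sum]
    have h1 : ∀ i : Fin n,
        germPhi l (Fin n → R)
          ((Filter.Germ.map (fun v : Fin n → R => v i) (↑f : Filter.Germ l (Fin n → R)))
            ⊗ₜ[R] (Pi.single i 1 : Fin n → R))
        = (↑(fun w => Pi.single i (f w i) : W → Fin n → R) : Filter.Germ l (Fin n → R)) := by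
      intro i
      rw [Filter.Germ.map_coe, germPhi_tmul]
      congr 1
      funext w j
      by_cases h : j = i <;> simp [h, Pi.single_apply, Function.comp]
    rw [Finset.sum_congr rfl fun i _ => h1 i, germ_coe_sum]
    congr 1
    funext w
    exact Finset.univ_sum_single (f w)

end Aux

attribute [-instance] germAlgebra

/-- for a commutative ring `R`, an ultrafilter `u` on a set `W` and
a finitely presented `R`-module `M`, the natural `R^W/u`-linear map
`M ⊗_R R^W/u → M^W/u`, sending `m ⊗ (class of (r_w))` to the class of
`(r_w • m)`, is bijective. (The ultrapower `R^W/u` is `(u : Filter W).Germ R`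
and `M^W/u` is `(u : Filter W).Germ M`.) -/
theorem tensor_ultrapower_bijective {R : Type*} [CommRing R] {W : Type*}
    (u : Ultrafilter W) (M : Type*) [AddCommGroup M] [Module R M]
    [Module.FinitePresentation R M] :
    ∃ φ : (((u : Filter W).Germ R) ⊗[R] M) →ₗ[(u : Filter W).Germ R]
        (u : Filter W).Germ M,
      (∀ (m : M) (r : W → R),
        φ ((↑r : (u : Filter W).Germ R) ⊗ₜ[R] m) =
          (↑(fun w => r w • m) : (u : Filter W).Germ M)) ∧
      Function.Bijective φ := by
  classical
  set l : Filter W := (u : Filter W)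
  letI : Algebra R (Filter.Germ l R) := germAlgebra l
  refine ⟨germPhi l M, fun m r => germPhi_tmul l r m, ?_, germPhi_surjective l M⟩
  -- injectivity
  rw [injective_iff_map_eq_zero]
  obtain ⟨n, π, hπ⟩ := Module.Finite.exists_fin' R M
  have hker : (LinearMap.ker π).FG := Module.FinitePresentation.fg_ker π hπ
  haveI : Module.Finite R (LinearMap.ker π) := Module.Finite.iff_fg.mpr hker
  intro x hx
  -- lift x along the surjection on tensor products
  have hsurj : Function.Surjective (π.baseChange (Filter.Germ l R)) := by
    have := LinearMap.lTensor_surjective (Filter.Germ l R) hπ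
    rwa [← LinearMap.baseChange_eq_ltensor] at this
  obtain ⟨y, hy⟩ := hsurj x
  have h1 : Filter.Germ.map π (germPhi l (Fin n → R) y) = 0 := by
    rw [germPhi_natural, hy, hx]
  obtain ⟨g, hg⟩ : ∃ g : W → (Fin n → R), (↑g : Filter.Germ l (Fin n → R))
      = germPhi l (Fin n → R) y :=
    (germPhi l (Fin n → R) y).inductionOn fun g => ⟨g, rfl⟩
  have hev : ∀ᶠ w in l, π (g w) = 0 := by
    have : Filter.Germ.map π (↑g : Filter.Germ l (Fin n → R)) = ↑(0 : W → M) := by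
      rw [hg, h1, Filter.Germ.coe_zero]
    rw [Filter.Germ.map_coe, Filter.Germ.coe_eq] at this
    exact this
  set g' : W → LinearMap.ker π := fun w =>
    if h : π (g w) = 0 then ⟨g w, h⟩ else 0 with hg'def
  have hg'coe : (↑(fun w => ((g' w : Fin n → R))) : Filter.Germ l (Fin n → R)) = ↑g := by
    rw [Filter.Germ.coe_eq]
    exact hev.mono fun w hw => by simp [hg'def, hw]
  obtain ⟨z, hz⟩ := germPhi_surjective (R := R) l (LinearMap.ker π) (↑g' : Filter.Germ l (LinearMap.ker π))
  have h2 : germPhi l (Fin n → R)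
      ((LinearMap.ker π).subtype.baseChange (Filter.Germ l R) z) = germPhi l (Fin n → R) y := by
    rw [← germPhi_natural, hz, Filter.Germ.map_coe, ← hg, ← hg'coe]
    rfl
  have hy2 : (LinearMap.ker π).subtype.baseChange (Filter.Germ l R) z = y :=
    (germPhi_free_bijective l n).injective h2
  have hcomp : π ∘ₗ (LinearMap.ker π).subtype = 0 := by
    ext ⟨v, hv⟩
    exact hv
  rw [← hy, ← hy2, ← LinearMap.comp_apply, ← LinearMap.baseChange_comp, hcomp]
  simp
end

section
/- Let R be a commutative ring and S a commutative R-algebra which is finite as an R-module. Let W be a set, u an ultrafilter on W, and (I_w)_{w∈W} a family of ideals of R. In the ultrapower ring S^W/u, the set J_S of classes of families (x_w) with x_w ∈ I_w·S for almost all w is an ideal, and it equals the extension along the induced ring homomorphism R^W/u → S^W/u of the ideal J_R of R^W/u consisting of classes of families (y_w) with y_w ∈ I_w for almost all w. Equivalently, if ζ₁, …, ζ_l generate S as an R-module, every element of J_S can be written as Σ_{i=1}^l a_i·ζ_i with a_i ∈ J_R. -/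
open Filter

/-- For an ultrafilter `u` on `W` and a family of ideals `J w` of a commutative
ring `A`, the ideal of the ultrapower `A^W/u` consisting of classes of families
`(x_w)` with `x_w ∈ J w` for almost all `w`. -/
def germIdeal {W A : Type*} [CommRing A] (u : Ultrafilter W) (J : W → Ideal A) :
    Ideal ((u : Filter W).Germ A) where
  carrier := {x | ∃ f : W → A, x = ↑f ∧ ∀ᶠ w in (u : Filter W), f w ∈ J w}
  zero_mem' :=
    ⟨0, (Filter.Germ.coe_zero (l := (u : Filter W))).symm,
      Filter.Eventually.of_forall fun w => (J w).zero_mem⟩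
  add_mem' := by
    rintro x y ⟨f, rfl, hf⟩ ⟨g, rfl, hg⟩
    exact ⟨f + g, (Filter.Germ.coe_add f g).symm,
      (hf.and hg).mono fun w hw => (J w).add_mem hw.1 hw.2⟩
  smul_mem' := by
    intro c x hx
    obtain ⟨f, rfl, hf⟩ := hx
    refine Filter.Germ.inductionOn c fun g => ?_
    show (↑g : (u : Filter W).Germ A) • (↑f : (u : Filter W).Germ A) ∈ _
    rw [smul_eq_mul, ← Filter.Germ.coe_mul]
    exact ⟨g * f, rfl, hf.mono fun w hw => Ideal.mul_mem_left (J w) (g w) hw⟩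

/-- The ring homomorphism `R^W/u →+* S^W/u` between ultrapowers induced
componentwise by a ring homomorphism `f : R →+* S`. -/
def germRingHom {W R S : Type*} [CommRing R] [CommRing S] (u : Ultrafilter W)
    (f : R →+* S) : (u : Filter W).Germ R →+* (u : Filter W).Germ S where
  toFun := Filter.Germ.map f
  map_one' := by
    rw [← Filter.Germ.coe_one, Filter.Germ.map_coe]
    exact congrArg Filter.Germ.ofFun (funext fun w => map_one f)
  map_mul' x y := by
    refine Filter.Germ.inductionOn₂ x y fun a b => ?_
    show Filter.Germ.map (⇑f) (Filter.Germ.ofFun a * Filter.Germ.ofFun b) =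
      Filter.Germ.map (⇑f) (Filter.Germ.ofFun a) *
        Filter.Germ.map (⇑f) (Filter.Germ.ofFun b)
    rw [← Filter.Germ.coe_mul, Filter.Germ.map_coe, Filter.Germ.map_coe,
      Filter.Germ.map_coe, ← Filter.Germ.coe_mul]
    exact congrArg Filter.Germ.ofFun
      (funext fun w => by simp [Function.comp, map_mul])
  map_zero' := by
    show Filter.Germ.map (⇑f) (Filter.Germ.ofFun (0 : W → R)) = 0
    rw [Filter.Germ.map_coe, ← Filter.Germ.coe_zero]
    exact congrArg Filter.Germ.ofFun (funext fun w => map_zero f)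
  map_add' x y := by
    refine Filter.Germ.inductionOn₂ x y fun a b => ?_
    show Filter.Germ.map (⇑f) (Filter.Germ.ofFun a + Filter.Germ.ofFun b) =
      Filter.Germ.map (⇑f) (Filter.Germ.ofFun a) +
        Filter.Germ.map (⇑f) (Filter.Germ.ofFun b)
    rw [← Filter.Germ.coe_add, Filter.Germ.map_coe, Filter.Germ.map_coe,
      Filter.Germ.map_coe, ← Filter.Germ.coe_add]
    exact congrArg Filter.Germ.ofFun
      (funext fun w => by simp [Function.comp, map_add])

lemma germIdeal_repr {R S : Type*} [CommRing R] [CommRing S]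
    [Algebra R S] {W : Type*} (u : Ultrafilter W) (I : W → Ideal R)
    (l : ℕ) (ζ : Fin l → S) (hζ : Submodule.span R (Set.range ζ) = ⊤) :
    ∀ x ∈ germIdeal u (fun w => (I w).map (algebraMap R S)),
      ∃ a : Fin l → (u : Filter W).Germ R,
        (∀ i, a i ∈ germIdeal u I) ∧
        x = ∑ i, germRingHom u (algebraMap R S) (a i) *
          (↑(fun _ : W => ζ i) : (u : Filter W).Germ S) := by
  classical
  rintro x ⟨f, rfl, hf⟩
  have key : ∀ w, f w ∈ (I w).map (algebraMap R S) →
      ∃ b : Fin l → R, (∀ i, b i ∈ I w) ∧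
        f w = ∑ i, algebraMap R S (b i) * ζ i := by
    intro w hw
    have h1 : f w ∈ (I w) • (⊤ : Submodule R S) := by
      rw [Ideal.smul_top_eq_map]; exact hw
    rw [← hζ, Submodule.mem_ideal_smul_span_iff_exists_sum] at h1
    obtain ⟨b, hb, hsum⟩ := h1
    refine ⟨b, hb, ?_⟩
    rw [← hsum, Finsupp.sum_fintype]
    · exact Finset.sum_congr rfl fun i _ => (Algebra.smul_def _ _)
    · intro i; simp
  set b : W → Fin l → R := fun w =>
    if h : f w ∈ (I w).map (algebraMap R S) then (key w h).choose else 0 with hbdef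
  refine ⟨fun i => (↑(fun w => b w i) : (u : Filter W).Germ R), ?_, ?_⟩
  · intro i
    refine ⟨fun w => b w i, rfl, hf.mono fun w hw => ?_⟩
    simp only [hbdef, dif_pos hw]
    exact (key w hw).choose_spec.1 i
  · have hcoe : ∀ i, germRingHom u (algebraMap R S)
        (↑(fun w => b w i) : (u : Filter W).Germ R) *
        (↑(fun _ : W => ζ i) : (u : Filter W).Germ S) =
        (↑(fun w => algebraMap R S (b w i) * ζ i) : (u : Filter W).Germ S) := by
      intro i
      simp only [germRingHom, RingHom.coe_mk, MonoidHom.coe_mk, OneHom.coe_mk]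
      rw [Filter.Germ.map_coe, ← Filter.Germ.coe_mul]
      rfl
    have hsum : (∑ i, (↑(fun w => algebraMap R S (b w i) * ζ i) :
        (u : Filter W).Germ S)) =
        (↑(fun w => ∑ i, algebraMap R S (b w i) * ζ i) : (u : Filter W).Germ S) := by
      have hfe : (fun w => ∑ i, algebraMap R S (b w i) * ζ i) =
          ∑ i : Fin l, (fun w => algebraMap R S (b w i) * ζ i) :=
        funext fun w => by simp
      rw [hfe, ← Filter.Germ.coe_coeRingHom, map_sum]
    rw [Finset.sum_congr rfl fun i _ => hcoe i, hsum]
    refine Filter.Germ.coe_eq.mpr (hf.mono fun w hw => ?_)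
    simp only [hbdef, dif_pos hw]
    exact (key w hw).choose_spec.2

/-- let `S` be a commutative `R`-algebra which is finite as an
`R`-module, `u` an ultrafilter on `W` and `(I w)` a family of ideals of `R`.
The ideal `J_S` of `S^W/u` of classes of families `(x_w)` with `x_w ∈ I_w·S`
almost everywhere equals the extension, along the induced map `R^W/u → S^W/u`,
of the ideal `J_R` of classes of families `(y_w)` with `y_w ∈ I_w` almost
everywhere. Equivalently, if `ζ₁, …, ζ_l` generate `S` as an `R`-module, then
every element of `J_S` is of the form `Σ aᵢ·ζᵢ` with `aᵢ ∈ J_R`. -/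
theorem germIdeal_map_algebra {R S : Type*} [CommRing R] [CommRing S]
    [Algebra R S] [Module.Finite R S] {W : Type*} (u : Ultrafilter W)
    (I : W → Ideal R) :
    germIdeal u (fun w => (I w).map (algebraMap R S)) =
        Ideal.map (germRingHom u (algebraMap R S)) (germIdeal u I) ∧
      ∀ (l : ℕ) (ζ : Fin l → S), Submodule.span R (Set.range ζ) = ⊤ →
        ∀ x ∈ germIdeal u (fun w => (I w).map (algebraMap R S)),
          ∃ a : Fin l → (u : Filter W).Germ R,
            (∀ i, a i ∈ germIdeal u I) ∧
            x = ∑ i, germRingHom u (algebraMap R S) (a i) *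
              (↑(fun _ : W => ζ i) : (u : Filter W).Germ S) := by
  obtain ⟨l, ζ, hζ⟩ := Module.Finite.exists_fin (R := R) (M := S)
  have repr := germIdeal_repr u I l ζ hζ
  constructor
  · apply le_antisymm
    · intro x hx
      obtain ⟨a, ha, rfl⟩ := repr x hx
      exact Ideal.sum_mem _ fun i _ =>
        Ideal.mul_mem_right _ _ (Ideal.mem_map_of_mem _ (ha i))
    · rw [Ideal.map_le_iff_le_comap]
      rintro y ⟨g, rfl, hg⟩
      refine ⟨fun w => algebraMap R S (g w), ?_, hg.mono fun w hw =>
        Ideal.mem_map_of_mem _ hw⟩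
      simp only [germRingHom, RingHom.coe_mk, MonoidHom.coe_mk, OneHom.coe_mk]
      rw [Filter.Germ.map_coe]
      rfl
  · intro l' ζ' hζ' x hx
    exact germIdeal_repr u I l' ζ' hζ' x hx
end
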